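/- For an open detailed balanced Markov process with boundary B ⊆ V and fixed boundary populations b : B → ℝ, a population distribution p with p|_B = b is a steady state (i.e., ∑_j H_{ij} p_j = 0 for all internal states i ∈ V∖B) if and only if p is a critical point of the dissipation D restricted to distributions agreeing with b on B. -/

import Mathlib

/-- For an open detailed balanced Markov process with boundary `B` and fixed
boundary populations `b`, a distribution agreeing with `b` on `B` is a steady
state iff it is a critical point of the dissipation restricted to
distributions agreeing with `b` on `B`. -/
theorem steady_state_iff_critical_point {V : Type*} [Fintype V] [DecidableEq V]
    (H : V → V → ℝ)
    (hoff : ∀ i j, i ≠ j → 0 ≤ H i j)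
    (hsum : ∀ j, ∑ i, H i j = 0)
    (q : V → ℝ) (hq : ∀ i, 0 < q i)
    (hdb : ∀ i j, H i j * q j = H j i * q i)
    (B : Finset V) (b : V → ℝ) (p : V → ℝ)
    (hpb : ∀ i ∈ B, p i = b i) :
    let D : (V → ℝ) → ℝ := fun r =>
      (1 / 2) * ∑ i, ∑ j, H i j * q j * (r j / q j - r i / q i) ^ 2
    (∀ i ∉ B, ∑ j, H i j * p j = 0) ↔
      (∀ n ∉ B, deriv (fun t => D (Function.update p n t)) (p n) = 0) := by
  intro D
  have key : ∀ n : V, deriv (fun t => D (Function.update p n t)) (p n)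
      = -(2 / q n) * ∑ j, H n j * p j := by
    intro n
    have hu : ∀ m : V, HasDerivAt (fun t => Function.update p n t m / q m)
        ((if m = n then (1:ℝ) else 0) / q m) (p n) := by
      intro m
      rcases eq_or_ne m n with h | h
      · subst h
        simpa using (hasDerivAt_id (p m)).div_const (q m)
      · simp only [Function.update_of_ne h, if_neg h, zero_div]
        exact hasDerivAt_const _ _
    have hterm : ∀ i j : V, HasDerivAt
        (fun t => H i j * q j *
          (Function.update p n t j / q j - Function.update p n t i / q i) ^ 2)
        (H i j * q j * ((2:ℕ) *
          (Function.update p n (p n) j / q j - Function.update p n (p n) i / q i) ^ (2-1) *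
          ((if j = n then (1:ℝ) else 0) / q j - (if i = n then (1:ℝ) else 0) / q i)))
        (p n) := fun i j => (((hu j).sub (hu i)).pow 2).const_mul _
    have hD : HasDerivAt (fun t => D (Function.update p n t))
        ((1/2 : ℝ) * ∑ i, ∑ j, (H i j * q j * ((2:ℕ) *
          (Function.update p n (p n) j / q j - Function.update p n (p n) i / q i) ^ (2-1) *
          ((if j = n then (1:ℝ) else 0) / q j - (if i = n then (1:ℝ) else 0) / q i))))
        (p n) :=
      (HasDerivAt.fun_sum (fun i _ => HasDerivAt.fun_sum (fun j _ => hterm i j))).const_mul _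
    rw [hD.deriv]
    simp only [Function.update_eq_self, Nat.cast_ofNat, show (2-1 : ℕ) = 1 from rfl, pow_one]
    have hsplit : ∀ i j : V,
        H i j * q j * ((2:ℝ) * (p j / q j - p i / q i) *
          ((if j = n then (1:ℝ) else 0) / q j - (if i = n then (1:ℝ) else 0) / q i))
        = (if j = n then 2 * H i j * q j * (p j / q j - p i / q i) / q j else 0)
          - (if i = n then 2 * H i j * q j * (p j / q j - p i / q i) / q i else 0) := by
      intro i j; split_ifs <;> ring
    rw [Finset.sum_congr rfl fun i _ => Finset.sum_congr rfl fun j _ => hsplit i j]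
    have h1 : ∑ i : V, ∑ j : V,
        ((if j = n then 2 * H i j * q j * (p j / q j - p i / q i) / q j else 0)
          - (if i = n then 2 * H i j * q j * (p j / q j - p i / q i) / q i else 0))
        = (∑ i : V, 2 * H i n * q n * (p n / q n - p i / q i) / q n)
          - ∑ j : V, 2 * H n j * q j * (p j / q j - p n / q n) / q n := by
      simp only [Finset.sum_sub_distrib]
      congr 1
      · simp
      · rw [Finset.sum_comm]; simp
    rw [h1]
    have hfe : ∀ i : V, 2 * H i n * q n * (p n / q n - p i / q i) / q n
        = -(2 * H n i * q i * (p i / q i - p n / q n) / q n) := by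
      intro i
      linear_combination (2 * (p n / q n - p i / q i) / q n) * hdb i n
    rw [Finset.sum_congr rfl fun i _ => hfe i, Finset.sum_neg_distrib]
    have hz : ∑ j : V, H n j * q j = 0 := by
      have he : ∀ j : V, H n j * q j = q n * H j n := fun j => by rw [hdb n j]; ring
      rw [Finset.sum_congr rfl fun j _ => he j, ← Finset.mul_sum, hsum n, mul_zero]
    have hS2 : ∑ j : V, 2 * H n j * q j * (p j / q j - p n / q n) / q n
        = (2 / q n) * ∑ j, H n j * p j
          - (2 * p n / (q n * q n)) * ∑ j, H n j * q j := by
      rw [Finset.mul_sum, Finset.mul_sum, ← Finset.sum_sub_distrib]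
      refine Finset.sum_congr rfl fun j _ => ?_
      field_simp [(hq j).ne', (hq n).ne']
    rw [hS2, hz, mul_zero]
    ring
  constructor
  · intro h n hn
    rw [key n, h n hn, mul_zero]
  · intro h n hn
    have h0 := key n
    rw [h n hn] at h0
    have h2 : -(2 / q n) ≠ 0 :=
      neg_ne_zero.mpr (div_ne_zero two_ne_zero (hq n).ne')
    exact (mul_eq_zero.mp h0.symm).resolve_left h2
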